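/- If X^1,...,X^N are exchangeable random vectors and for each N the first member X^{1,N} converges to a limit U^1 in L^p as N → ∞, then the sample mean X̄^N = (1/N) Σ_{n=1}^N X^{n,N} also converges in L^p to U^1's expectation provided the U^n are i.i.d. copies forming exchangeable pairs with the X^n; more precisely: if the array [(X^{n,N}, U^n)]_{n=1}^N has exchangeable columns, U^1,...,U^N are i.i.d. with U^1 ∈ L^p, and ‖X^{1,N} − U^1‖_p → 0, then ‖X̄^N − E(U^1)‖_p → 0 as N → ∞, for any 1 ≤ p < ∞. -/

import Mathlib

open MeasureTheory ProbabilityTheory Filter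
open scoped ENNReal NNReal Topology

set_option maxHeartbeats 1000000

/-- If the array of pairs `[(X^{n,N}, Uⁿ)]` has exchangeable columns, the `Uⁿ` are i.i.d.
with `U¹ ∈ Lᵖ`, and `‖X^{1,N} − U¹‖_p → 0`, then the sample mean `X̄ᴺ` converges in `Lᵖ`
to `E(U¹)` as `N → ∞`. -/
theorem sample_mean_tendsto_of_exchangeable
    {Ω : Type*} [MeasurableSpace Ω] (P : Measure Ω) [IsProbabilityMeasure P]
    {m : ℕ}
    (X : (N : ℕ) → Fin (N + 1) → Ω → EuclideanSpace ℝ (Fin m))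
    (U : ℕ → Ω → EuclideanSpace ℝ (Fin m))
    (hXmeas : ∀ N n, Measurable (X N n)) (hUmeas : ∀ n, Measurable (U n))
    (p : ℝ≥0∞) (hp : 1 ≤ p) (hp' : p ≠ ∞)
    (hexch : ∀ (N : ℕ) (π : Equiv.Perm (Fin (N + 1))),
      P.map (fun ω => fun n : Fin (N + 1) => (X N (π n) ω, U (π n : ℕ) ω))
        = P.map (fun ω => fun n : Fin (N + 1) => (X N n ω, U (n : ℕ) ω)))
    (hUindep : iIndepFun U P)
    (hUid : ∀ n, IdentDistrib (U n) (U 0) P P)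
    (hULp : MemLp (U 0) p P)
    (hconv : Tendsto (fun N => eLpNorm (fun ω => X N 0 ω - U 0 ω) p P) atTop (𝓝 0)) :
    Tendsto (fun N =>
        eLpNorm (fun ω => (((N + 1 : ℕ) : ℝ))⁻¹ • ∑ n : Fin (N + 1), X N n ω - ∫ ω', U 0 ω' ∂P) p P)
      atTop (𝓝 0) := by
  -- identical distribution of X N n - U n with X N 0 - U 0
  have hid : ∀ N (n : Fin (N + 1)),
      IdentDistrib (fun ω => X N n ω - U (n : ℕ) ω) (fun ω => X N 0 ω - U 0 ω) P P := by
    intro N n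
    have h := hexch N (Equiv.swap 0 n)
    set f : (Fin (N + 1) → (EuclideanSpace ℝ (Fin m)) × (EuclideanSpace ℝ (Fin m))) → EuclideanSpace ℝ (Fin m) := fun v => (v 0).1 - (v 0).2 with hfdef
    have hf : Measurable f :=
      (measurable_fst.comp (measurable_pi_apply 0)).sub
        (measurable_snd.comp (measurable_pi_apply 0))
    have hg1 : Measurable (fun ω => fun k : Fin (N + 1) =>
        (X N (Equiv.swap 0 n k) ω, U ((Equiv.swap 0 n k : Fin (N+1)) : ℕ) ω)) :=
      measurable_pi_lambda _ fun k => (hXmeas N _).prodMk (hUmeas _)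
    have hg2 : Measurable (fun ω => fun k : Fin (N + 1) => (X N k ω, U (k : ℕ) ω)) :=
      measurable_pi_lambda _ fun k => (hXmeas N k).prodMk (hUmeas _)
    refine ⟨((hXmeas N n).sub (hUmeas _)).aemeasurable,
      ((hXmeas N 0).sub (hUmeas 0)).aemeasurable, ?_⟩
    have e1 : (fun ω => X N n ω - U (n : ℕ) ω)
        = f ∘ (fun ω => fun k : Fin (N + 1) =>
            (X N (Equiv.swap 0 n k) ω, U ((Equiv.swap 0 n k : Fin (N+1)) : ℕ) ω)) := by
      funext ω; simp [hfdef, Equiv.swap_apply_left]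
    have e2 : (fun ω => X N 0 ω - U 0 ω)
        = f ∘ (fun ω => fun k : Fin (N + 1) => (X N k ω, U (k : ℕ) ω)) := by
      funext ω; simp [hfdef]
    rw [e1, e2, ← Measure.map_map hf hg1, ← Measure.map_map hf hg2, h]
  -- eLpNorm equality for each term
  have heq : ∀ N (n : Fin (N + 1)),
      eLpNorm (fun ω => X N n ω - U (n : ℕ) ω) p P
        = eLpNorm (fun ω => X N 0 ω - U 0 ω) p P := fun N n => (hid N n).eLpNorm_eq p
  -- the difference term tends to zero
  have hD : Tendsto (fun N => eLpNorm
      (fun ω => (((N + 1 : ℕ) : ℝ))⁻¹ • ∑ n : Fin (N + 1), (X N n ω - U (n : ℕ) ω)) p P)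
      atTop (𝓝 0) := by
    have hbound : ∀ N, eLpNorm
        (fun ω => (((N + 1 : ℕ) : ℝ))⁻¹ • ∑ n : Fin (N + 1), (X N n ω - U (n : ℕ) ω)) p P
          ≤ eLpNorm (fun ω => X N 0 ω - U 0 ω) p P := by
      intro N
      have hc : (‖((((N + 1 : ℕ) : ℝ)))⁻¹‖₊ : ℝ≥0∞) = (((N + 1 : ℕ) : ℝ≥0∞))⁻¹ := by
        rw [nnnorm_inv, Real.nnnorm_natCast, ENNReal.coe_inv (Nat.cast_ne_zero.mpr (Nat.succ_ne_zero N))]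
        simp
      have hsmul : eLpNorm
          (fun ω => (((N + 1 : ℕ) : ℝ))⁻¹ • ∑ n : Fin (N + 1), (X N n ω - U (n : ℕ) ω)) p P
          = (((N + 1 : ℕ) : ℝ≥0∞))⁻¹ * eLpNorm
            (fun ω => ∑ n : Fin (N + 1), (X N n ω - U (n : ℕ) ω)) p P := by
        rw [show (fun ω => (((N + 1 : ℕ) : ℝ))⁻¹ • ∑ n : Fin (N + 1), (X N n ω - U (n : ℕ) ω))
            = (((N + 1 : ℕ) : ℝ))⁻¹ • (fun ω => ∑ n : Fin (N + 1), (X N n ω - U (n : ℕ) ω))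
            from rfl, eLpNorm_const_smul]
        rw [enorm_eq_nnnorm, hc]
      have hsum : eLpNorm (fun ω => ∑ n : Fin (N + 1), (X N n ω - U (n : ℕ) ω)) p P
          ≤ ∑ n : Fin (N + 1), eLpNorm (fun ω => X N n ω - U (n : ℕ) ω) p P := by
        have h2 := eLpNorm_sum_le (μ := P) (s := Finset.univ)
          (f := fun (n : Fin (N + 1)) ω => X N n ω - U (n : ℕ) ω)
          (fun n _ => ((hXmeas N n).sub (hUmeas _)).aestronglyMeasurable) hp
        have hfun : (∑ n : Fin (N + 1), fun ω => X N n ω - U (n : ℕ) ω)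
            = fun ω => ∑ n : Fin (N + 1), (X N n ω - U (n : ℕ) ω) := by
          funext ω; exact Finset.sum_apply ω Finset.univ _
        rwa [hfun] at h2
      rw [hsmul]
      calc (((N + 1 : ℕ) : ℝ≥0∞))⁻¹ * eLpNorm
            (fun ω => ∑ n : Fin (N + 1), (X N n ω - U (n : ℕ) ω)) p P
          ≤ (((N + 1 : ℕ) : ℝ≥0∞))⁻¹ *
            ∑ n : Fin (N + 1), eLpNorm (fun ω => X N n ω - U (n : ℕ) ω) p P :=
            mul_le_mul_right hsum _
        _ = (((N + 1 : ℕ) : ℝ≥0∞))⁻¹ *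
            ((N + 1 : ℕ) * eLpNorm (fun ω => X N 0 ω - U 0 ω) p P) := by
            simp only [heq N, Finset.sum_const, Finset.card_univ, Fintype.card_fin,
              nsmul_eq_mul]
        _ = eLpNorm (fun ω => X N 0 ω - U 0 ω) p P := by
            rw [← mul_assoc, ENNReal.inv_mul_cancel (by exact_mod_cast Nat.succ_ne_zero N)
              (ENNReal.natCast_ne_top _), one_mul]
    exact tendsto_of_tendsto_of_tendsto_of_le_of_le tendsto_const_nhds hconv
      (fun N => zero_le) hbound
  -- LLN for U
  have hLLN : Tendsto (fun N => eLpNorm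
      (fun ω => (((N + 1 : ℕ) : ℝ))⁻¹ • ∑ n : Fin (N + 1), U (n : ℕ) ω - ∫ ω', U 0 ω' ∂P) p P)
      atTop (𝓝 0) := by
    have h := strong_law_Lp (μ := P) hp hp' U hULp
      (fun i j hij => hUindep.indepFun hij) hUid
    have h' := h.comp (tendsto_add_atTop_nat 1)
    refine h'.congr fun N => ?_
    simp only [Function.comp]
    congr 1
    funext ω
    rw [Fin.sum_univ_eq_sum_range (fun n => U n ω) (N + 1)]
  -- combine
  have hbound2 : ∀ N, eLpNorm
      (fun ω => (((N + 1 : ℕ) : ℝ))⁻¹ • ∑ n : Fin (N + 1), X N n ω - ∫ ω', U 0 ω' ∂P) p P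
      ≤ eLpNorm
        (fun ω => (((N + 1 : ℕ) : ℝ))⁻¹ • ∑ n : Fin (N + 1), (X N n ω - U (n : ℕ) ω)) p P
      + eLpNorm
        (fun ω => (((N + 1 : ℕ) : ℝ))⁻¹ • ∑ n : Fin (N + 1), U (n : ℕ) ω - ∫ ω', U 0 ω' ∂P) p P := by
    intro N
    have hdecomp : (fun ω => (((N + 1 : ℕ) : ℝ))⁻¹ • ∑ n : Fin (N + 1), X N n ω - ∫ ω', U 0 ω' ∂P)
        = (fun ω => (((N + 1 : ℕ) : ℝ))⁻¹ • ∑ n : Fin (N + 1), (X N n ω - U (n : ℕ) ω))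
          + (fun ω => (((N + 1 : ℕ) : ℝ))⁻¹ • ∑ n : Fin (N + 1), U (n : ℕ) ω - ∫ ω', U 0 ω' ∂P) := by
      funext ω
      simp only [Pi.add_apply, Finset.sum_sub_distrib, smul_sub]
      abel
    rw [hdecomp]
    exact eLpNorm_add_le
      (by have := hXmeas; have := hUmeas; fun_prop)
      (by have := hUmeas; fun_prop) hp
  have hsum0 : Tendsto (fun N =>
      eLpNorm (fun ω => (((N + 1 : ℕ) : ℝ))⁻¹ • ∑ n : Fin (N + 1), (X N n ω - U (n : ℕ) ω)) p P
      + eLpNorm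
        (fun ω => (((N + 1 : ℕ) : ℝ))⁻¹ • ∑ n : Fin (N + 1), U (n : ℕ) ω - ∫ ω', U 0 ω' ∂P) p P)
      atTop (𝓝 0) := by
    simpa using Filter.Tendsto.add hD hLLN
  exact tendsto_of_tendsto_of_tendsto_of_le_of_le tendsto_const_nhds hsum0
    (fun N => zero_le) hbound2
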